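/- Let G be a finite group in which every Sylow subgroup is cyclic. Then the commutator subgroup G' of G is cyclic and the quotient G/G' is cyclic. -/

import Mathlib

open Subgroup Monoid

section Aux

variable {G : Type*}

/-- An element of maximal `p`-order exists: `p`-part of card divides exponent. -/
lemma zgroup_exponent_eq_card [Group G] [Finite G]
    (hsyl : ∀ p : ℕ, p.Prime → ∀ P : Sylow p G, IsCyclic P) :
    Monoid.exponent G = Nat.card G := by
  have hcard : Nat.card G ≠ 0 := Nat.card_pos.ne'
  refine Nat.dvd_antisymm ?_ ?_
  · classical
    letI : Fintype G := Fintype.ofFinite G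
    rw [Nat.card_eq_fintype_card]
    exact Group.exponent_dvd_card
  · rw [← Nat.factorization_le_iff_dvd hcard Monoid.exponent_ne_zero_of_finite]
    intro p
    by_cases hp : p.Prime
    · haveI : Fact p.Prime := ⟨hp⟩
      obtain ⟨P⟩ : Nonempty (Sylow p G) := Sylow.nonempty
      have hcyc := hsyl p hp P
      have hPcard : Nat.card P = p ^ (Nat.card G).factorization p :=
        P.card_eq_multiplicity
      have hexp : p ^ (Nat.card G).factorization p ∣ Monoid.exponent G := by
        obtain ⟨g, hg⟩ := hcyc.exists_generator
        have hord : orderOf g = Nat.card P := by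
          have := IsCyclic.exponent_eq_card (α := P)
          refine Nat.dvd_antisymm (orderOf_dvd_natCard g) ?_
          rw [← this]
          exact Monoid.exponent_dvd_of_forall_pow_eq_one fun x => by
            obtain ⟨k, hk⟩ := hg x
            rw [← hk, ← zpow_natCast, ← zpow_mul, mul_comm, zpow_mul, zpow_natCast,
              pow_orderOf_eq_one, one_zpow]
        have : orderOf ((g : P) : G) = orderOf g :=
          orderOf_injective (P : Subgroup G).subtype Subtype.coe_injective g
        rw [← hPcard, ← hord, ← this]
        exact Monoid.order_dvd_exponent _
      simpa [Nat.Prime.pow_dvd_iff_le_factorization hp Monoid.exponent_ne_zero_of_finite]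
        using hexp
    · simp [Nat.factorization_eq_zero_of_not_prime _ hp]

/-- An "abelian" Z-group is cyclic. -/
lemma zgroup_isCyclic_of_comm [Group G] [Finite G]
    (hsyl : ∀ p : ℕ, p.Prime → ∀ P : Sylow p G, IsCyclic P)
    (hcomm : ∀ x y : G, Commute x y) : IsCyclic G := by
  letI : CommGroup G := { (inferInstance : Group G) with mul_comm := hcomm }
  exact IsCyclic.of_exponent_eq_card (zgroup_exponent_eq_card hsyl)

/-- Automorphisms of a cyclic group commute. -/
lemma mulAut_commute_of_isCyclic [Group G] (h : IsCyclic G) (σ τ : MulAut G) :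
    Commute σ τ := by
  obtain ⟨g, hg⟩ := h.exists_generator
  obtain ⟨m, hm⟩ := hg (τ g)
  obtain ⟨k, hk⟩ := hg (σ g)
  ext x
  obtain ⟨n, rfl⟩ := hg x
  simp only at hm hk
  show σ (τ (g ^ n)) = τ (σ (g ^ n))
  have e1 : σ (τ (g ^ n)) = g ^ (k * (m * n)) := by
    rw [map_zpow, ← hm, ← zpow_mul, map_zpow, ← hk, ← zpow_mul]
  have e2 : τ (σ (g ^ n)) = g ^ (m * (k * n)) := by
    rw [map_zpow, ← hk, ← zpow_mul, map_zpow, ← hm, ← zpow_mul]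
  rw [e1, e2, mul_left_comm]

end Aux

section Burnside

variable {G : Type*} [Group G] [Finite G]

lemma minFac_sylow_normalizer_le_centralizer [Nontrivial G]
    (P : Sylow ((Nat.card G).minFac) G) (hcyc : IsCyclic P) :
    Subgroup.normalizer (P : Set G) ≤ Subgroup.centralizer (P : Set G) := by
  have hG1 : Nat.card G ≠ 1 := (Finite.one_lt_card (α := G)).ne'
  have hpprime : ((Nat.card G).minFac).Prime := Nat.minFac_prime hG1
  haveI : Fact ((Nat.card G).minFac).Prime := ⟨hpprime⟩
  have hp2 : 2 ≤ (Nat.card G).minFac := hpprime.two_le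
  haveI : IsCyclic (P : Subgroup G) := hcyc
  haveI hPcomm : IsMulCommutative (P : Subgroup G) :=
    ⟨⟨fun a b => by
      obtain ⟨g, hg⟩ := hcyc.exists_generator
      obtain ⟨i, rfl⟩ := hg a
      obtain ⟨j, rfl⟩ := hg b
      exact Commute.zpow_zpow (Commute.refl g) i j⟩⟩
  set φ := (P : Subgroup G).normalizerMonoidHom with hφ_def
  suffices hker : φ.ker = ⊤ by
    intro x hx
    have hmem : (⟨x, hx⟩ : (Subgroup.normalizer (P : Set G))) ∈ φ.ker := hker ▸ Subgroup.mem_top _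
    rw [Subgroup.normalizerMonoidHom_ker] at hmem
    exact (Subgroup.mem_subgroupOf).mp hmem
  set m := φ.ker.index with hm_def
  have hm0 : m ≠ 0 := Subgroup.FiniteIndex.index_ne_zero
  have hmdvdAut : m ∣ Nat.card (MulAut (P : Subgroup G)) := by
    rw [hm_def, Subgroup.index_ker]
    exact Subgroup.card_subgroup_dvd_card _
  have hPleN : (P : Subgroup G) ≤ (Subgroup.normalizer (P : Set G)) := Subgroup.le_normalizer
  have hPker : (P : Subgroup G).subgroupOf (Subgroup.normalizer (P : Set G)) ≤ φ.ker := by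
    rw [Subgroup.normalizerMonoidHom_ker]
    intro x hx
    rw [Subgroup.mem_subgroupOf] at hx ⊢
    exact Subgroup.le_centralizer _ hx
  have hpnm : ¬ (Nat.card G).minFac ∣ m := by
    intro hpm
    have hdvd : m ∣ ((P : Subgroup G).subgroupOf (Subgroup.normalizer (P : Set G))).index :=
      Subgroup.index_dvd_of_le hPker
    have hco : ((P.subtype hPleN : Sylow ((Nat.card G).minFac) (Subgroup.normalizer (P : Set G))) :
        Subgroup (Subgroup.normalizer (P : Set G))) = (P : Subgroup G).subgroupOf _ :=
      P.coe_subtype hPleN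
    exact (P.subtype hPleN).not_dvd_index (hco ▸ (hpm.trans hdvd))
  have hk1 : 1 ≤ (Nat.card G).factorization (Nat.card G).minFac :=
    Nat.Prime.factorization_pos_of_dvd hpprime Nat.card_pos.ne' (Nat.minFac_dvd _)
  have hAut : Nat.card (MulAut (P : Subgroup G)) =
      (Nat.card G).minFac ^ ((Nat.card G).factorization (Nat.card G).minFac - 1) *
        ((Nat.card G).minFac - 1) := by
    rw [IsCyclic.card_mulAut, P.card_eq_multiplicity, Nat.totient_prime_pow hpprime hk1]
  have key : ∀ q : ℕ, q.Prime → ¬ q ∣ m := by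
    intro q hq hqm
    have hqAut := hAut ▸ hqm.trans hmdvdAut
    have hqG : q ∣ Nat.card G := by
      have h1 : m ∣ Nat.card (Subgroup.normalizer (P : Set G)) := Subgroup.index_dvd_card _
      have h2 : Nat.card (Subgroup.normalizer (P : Set G)) ∣ Nat.card G :=
        Subgroup.card_subgroup_dvd_card _
      exact hqm.trans (h1.trans h2)
    have hpq : (Nat.card G).minFac ≤ q := Nat.minFac_le_of_dvd hq.two_le hqG
    rcases (Nat.Prime.dvd_mul hq).mp hqAut with h | h
    · have : q = (Nat.card G).minFac :=
        (Nat.prime_dvd_prime_iff_eq hq hpprime).mp (hq.dvd_of_dvd_pow h)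
      exact hpnm (this ▸ hqm)
    · have hq_le : q ≤ (Nat.card G).minFac - 1 := Nat.le_of_dvd (by omega) h
      omega
  have hm1 : m = 1 := by
    by_contra hm1
    exact key m.minFac (Nat.minFac_prime hm1) (Nat.minFac_dvd m)
  exact Subgroup.index_eq_one.mp hm1

end Burnside

section Solvable

lemma zgroup_isSolvable' : ∀ (n : ℕ) {G : Type*} [Group G] [Finite G], Nat.card G = n →
    (∀ p : ℕ, p.Prime → ∀ P : Sylow p G, IsCyclic P) → Group.IsSolvable G := by
  intro n
  induction n using Nat.strong_induction_on with
  | _ n ih =>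
    intro G _ _ hn hsyl
    rcases subsingleton_or_nontrivial G with hG | hG
    · infer_instance
    · have hG1 : Nat.card G ≠ 1 := (Finite.one_lt_card (α := G)).ne'
      have hpprime : ((Nat.card G).minFac).Prime := Nat.minFac_prime hG1
      haveI : Fact ((Nat.card G).minFac).Prime := ⟨hpprime⟩
      obtain ⟨P⟩ : Nonempty (Sylow ((Nat.card G).minFac) G) := Sylow.nonempty
      have hcyc : IsCyclic P := hsyl _ hpprime P
      have hNC := minFac_sylow_normalizer_le_centralizer P hcyc
      set f := MonoidHom.transferSylow P hNC with hf_def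
      have hcompl := MonoidHom.ker_transferSylow_isComplement' P hNC
      have hcardmul : Nat.card f.ker * Nat.card (P : Subgroup G) = Nat.card G :=
        hcompl.card_mul
      have hPcard : 1 < Nat.card (P : Subgroup G) := by
        have := P.card_eq_multiplicity
        have hk1 : 1 ≤ (Nat.card G).factorization (Nat.card G).minFac :=
          Nat.Prime.factorization_pos_of_dvd hpprime Nat.card_pos.ne' (Nat.minFac_dvd _)
        calc 1 < (Nat.card G).minFac ^ 1 := by
              simpa using hpprime.one_lt
          _ ≤ (Nat.card G).minFac ^ (Nat.card G).factorization (Nat.card G).minFac :=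
              Nat.pow_le_pow_right hpprime.pos hk1
          _ = Nat.card (P : Subgroup G) := this.symm
      have hKlt : Nat.card f.ker < n := by
        have h0 : 0 < Nat.card f.ker := Nat.card_pos
        calc Nat.card f.ker = Nat.card f.ker * 1 := (mul_one _).symm
          _ < Nat.card f.ker * Nat.card (P : Subgroup G) :=
              mul_lt_mul_of_pos_left hPcard h0
          _ = Nat.card G := hcardmul
          _ = n := hn
      haveI : Group.IsSolvable f.ker := by
        refine ih _ hKlt rfl ?_
        intro q hq Q
        haveI : Fact q.Prime := ⟨hq⟩
        obtain ⟨R, hR⟩ := Q.exists_comap_eq_of_injective f.ker.subtype_injective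
        have hQR : Subgroup.map f.ker.subtype (Q : Subgroup f.ker) ≤ (R : Subgroup G) :=
          hR ▸ Subgroup.map_comap_le _ _
        have hcycR : IsCyclic (R : Subgroup G) := hsyl q hq R
        have h1 : IsCyclic (Subgroup.map f.ker.subtype (Q : Subgroup f.ker)) := by
          haveI := hcycR
          exact isCyclic_of_surjective _ (Subgroup.subgroupOfEquivOfLe hQR).surjective
        exact isCyclic_of_surjective _
          (Subgroup.equivMapOfInjective _ _ f.ker.subtype_injective).symm.surjective
      haveI : Group.IsSolvable (P : Subgroup G) := by
        letI := hcyc.commGroup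
        infer_instance
      exact Group.isSolvable_of_ker_le_range f.ker.subtype f (le_of_eq f.ker.range_subtype.symm)

end Solvable

section Derived

variable {G : Type*} [Group G]

lemma derivedSeries_le_derivedSeries (m k : ℕ) (h : m ≤ k) :
    derivedSeries G k ≤ derivedSeries G m := by
  induction h with
  | refl => exact le_refl _
  | @step k h ih =>
    refine le_trans ?_ ih
    rw [derivedSeries_succ]
    haveI := derivedSeries_normal G k
    exact Subgroup.commutator_le_right _ _

open scoped commutatorElement in
lemma quotient_commutator_comm (x y : G ⧸ commutator G) : Commute x y := by
  induction x using QuotientGroup.induction_on with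
  | H a =>
  induction y using QuotientGroup.induction_on with
  | H b =>
  rw [← commutatorElement_eq_one_iff_commute]
  show ⁅(QuotientGroup.mk' (commutator G)) a, (QuotientGroup.mk' (commutator G)) b⁆ = 1
  rw [← map_commutatorElement]
  rw [QuotientGroup.mk'_apply, QuotientGroup.eq_one_iff]
  exact Subgroup.commutator_mem_commutator (Subgroup.mem_top a) (Subgroup.mem_top b)

variable [Finite G]

lemma zgroup_derived_step [IsZGroup G] (n : ℕ)
    (h3 : derivedSeries G (n + 3) = ⊥) : derivedSeries G (n + 2) = ⊥ := by
  haveI hAnormal := derivedSeries_normal G (n + 2)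
  -- A := derivedSeries G (n+2) is abelian, hence cyclic
  have hAcomm : derivedSeries G (n + 2) ≤ Subgroup.centralizer (derivedSeries G (n + 2)) :=
    Subgroup.commutator_eq_bot_iff_le_centralizer.mp h3
  have hAcyc : IsCyclic (derivedSeries G (n + 2)) := by
    refine zgroup_isCyclic_of_comm (IsZGroup.isZGroup) ?_
    intro x y
    have hx := Subgroup.mem_centralizer_iff.mp (hAcomm x.2)
    exact Subtype.ext (by push_cast; exact (hx (y : G) y.2).symm)
  -- every element of the commutator subgroup centralizes A
  set φ := (MulAut.conjNormal : G →* MulAut (derivedSeries G (n + 2))) with hφ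
  have hcommle : commutator G ≤ φ.ker := by
    rw [_root_.commutator_def]
    refine Subgroup.commutator_le.mpr fun g₁ _ g₂ _ => ?_
    rw [MonoidHom.mem_ker, map_commutatorElement]
    exact commutatorElement_eq_one_iff_commute.mpr
      (mulAut_commute_of_isCyclic hAcyc _ _)
  -- work inside H := derivedSeries G (n+1)
  have hAleH : derivedSeries G (n + 2) ≤ derivedSeries G (n + 1) :=
    derivedSeries_le_derivedSeries _ _ (by omega)
  have hHle : derivedSeries G (n + 1) ≤ commutator G := by
    rw [← derivedSeries_one]
    exact derivedSeries_le_derivedSeries _ _ (by omega)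
  have hmap : Subgroup.map (derivedSeries G (n + 1)).subtype
      (commutator (derivedSeries G (n + 1))) = derivedSeries G (n + 2) := by
    rw [_root_.commutator_def, Subgroup.map_commutator, ← MonoidHom.range_eq_map,
      Subgroup.range_subtype]
    exact (derivedSeries_succ G (n + 1)).symm
  have hcenter : commutator (derivedSeries G (n + 1)) ≤
      Subgroup.center (derivedSeries G (n + 1)) := by
    intro x hx
    rw [Subgroup.mem_center_iff]
    intro g
    have hxA : (x : G) ∈ derivedSeries G (n + 2) := by
      rw [← hmap]
      exact Subgroup.mem_map_of_mem _ hx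
    have hgker : (g : G) ∈ φ.ker := hcommle (hHle g.2)
    have := MulAut.conjNormal_apply (H := derivedSeries G (n + 2)) (g : G) ⟨x, hxA⟩
    rw [MonoidHom.mem_ker] at hgker
    rw [hφ] at hgker
    have h1 : ((MulAut.conjNormal (g : G) : MulAut (derivedSeries G (n + 2)))
        ⟨(x : G), hxA⟩ : G) = (x : G) := by rw [hgker]; rfl
    rw [MulAut.conjNormal_apply] at h1
    have hgx : (g : G) * (x : G) = (x : G) * (g : G) := by
      have h2 : (g : G) * (x : G) * (g : G)⁻¹ * (g : G) = (x : G) * (g : G) := by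
        rw [h1]
      rwa [mul_assoc, inv_mul_cancel, mul_one] at h2
    exact Subtype.ext hgx
  -- the quotient by the center is cyclic, so H is abelian
  have hq1 : IsCyclic ((derivedSeries G (n + 1)) ⧸ commutator (derivedSeries G (n + 1))) := by
    refine zgroup_isCyclic_of_comm (IsZGroup.isZGroup) quotient_commutator_comm
  have hq2 : IsCyclic ((derivedSeries G (n + 1)) ⧸
      Subgroup.center (derivedSeries G (n + 1))) := by
    haveI := hq1
    refine isCyclic_of_surjective
      (QuotientGroup.map (G := (derivedSeries G (n + 1))) (H := (derivedSeries G (n + 1)))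
        (_root_.commutator (derivedSeries G (n + 1)))
        (Subgroup.center (derivedSeries G (n + 1)))
        (MonoidHom.id _) (fun x hx => hcenter hx)) ?_
    intro x
    induction x using QuotientGroup.induction_on with
    | H g => exact ⟨QuotientGroup.mk g, rfl⟩
  have habelian : ∀ a b : (derivedSeries G (n + 1)), a * b = b * a := by
    haveI := hq2
    exact commutative_of_cyclic_center_quotient (QuotientGroup.mk' _)
      (le_of_eq (QuotientGroup.ker_mk' _))
  have hbot : commutator (derivedSeries G (n + 1)) = ⊥ := by
    rw [_root_.commutator_def, eq_bot_iff]
    refine Subgroup.commutator_le.mpr fun g₁ _ g₂ _ => ?_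
    rw [commutatorElement_eq_one_iff_commute.mpr (habelian g₁ g₂)]
    exact Subgroup.one_mem _
  rw [← hmap, hbot, Subgroup.map_bot]

end Derived

theorem stmt_11 {G : Type*} [Group G] [Fintype G]
    (hsyl : ∀ p : ℕ, p.Prime → ∀ P : Sylow p G, IsCyclic P) :
    IsCyclic (commutator G) ∧ IsCyclic (G ⧸ commutator G) := by
  haveI : Finite G := Finite.of_fintype G
  haveI : IsZGroup G := ⟨hsyl⟩
  haveI : Group.IsSolvable G := zgroup_isSolvable' (Nat.card G) rfl hsyl
  obtain ⟨k, hk⟩ := Group.IsSolvable.solvable (G := G)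
  have descent : ∀ j, derivedSeries G (j + 2) = ⊥ → derivedSeries G 2 = ⊥ := by
    intro j
    induction j with
    | zero => exact id
    | succ j ih =>
      intro h
      exact ih (zgroup_derived_step j h)
  have h2 : derivedSeries G 2 = ⊥ := by
    refine descent k (eq_bot_iff.mpr ?_)
    exact le_trans (derivedSeries_le_derivedSeries k (k + 2) (by omega)) hk.le
  have hc : ⁅_root_.commutator G, _root_.commutator G⁆ = ⊥ := by
    have := (derivedSeries_succ G 1) ▸ h2
    rwa [derivedSeries_one] at this
  constructor
  · refine zgroup_isCyclic_of_comm (IsZGroup.isZGroup) ?_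
    intro x y
    have hle := Subgroup.commutator_eq_bot_iff_le_centralizer.mp hc
    have hx := Subgroup.mem_centralizer_iff.mp (hle x.2)
    exact Subtype.ext (by push_cast; exact (hx (y : G) y.2).symm)
  · exact zgroup_isCyclic_of_comm (IsZGroup.isZGroup) quotient_commutator_comm
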